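/- Let G be a finite simple graph on vertex set W and let D ⊆ W be an independent set of G (no two vertices of D are adjacent). Then X_D Z_{Odd(D)} |G⟩ = |G⟩, i.e., the operator K_D = ∏_{j∈D} X_j ∏_{k∈Odd(D)} Z_k stabilizes the graph state |G⟩. -/

import Mathlib

open Matrix

/-- The odd neighbourhood of a set `S`: the set of vertices `v` such that the number
of neighbours of `v` lying in `S` is odd. -/
def oddNbhd {V : Type*} (G : SimpleGraph V) (S : Set V) : Set V :=
  {v | Odd (G.neighborSet v ∩ S).ncard}

/-- The quadratic form of a graph: `q(x) = ∑_{{u,v} ∈ E(H)} x_u x_v` over `𝔽₂`. -/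
noncomputable def qForm {W : Type*} (H : SimpleGraph W) (x : W → ZMod 2) : ZMod 2 :=
  ∑ᶠ e ∈ H.edgeSet, Sym2.lift ⟨fun u v => x u * x v, fun _ _ => mul_comm _ _⟩ e

/-- The graph state of `H`: the vector in `ℂ^(W → ZMod 2)` with amplitude
`2^{-|W|/2} (-1)^{q(x)}` at the basis label `x`. -/
noncomputable def graphState {W : Type*} (H : SimpleGraph W) : (W → ZMod 2) → ℂ :=
  fun x => (Real.sqrt 2 : ℂ)⁻¹ ^ Nat.card W * (-1 : ℂ) ^ (qForm H x).val

/-- The Pauli operator `X_S = ∏_{w ∈ S} X_w`, acting by `(X_S ψ)(x) = ψ(x + 1_S)`. -/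
noncomputable def XOp {W : Type*} (S : Set W) (ψ : (W → ZMod 2) → ℂ) : (W → ZMod 2) → ℂ :=
  fun x => ψ (x + S.indicator 1)

/-- The Pauli operator `Z_S = ∏_{w ∈ S} Z_w`, acting by
`(Z_S ψ)(x) = (-1)^{∑_{w ∈ S} x_w} ψ(x)`. -/
noncomputable def ZOp {W : Type*} (S : Set W) (ψ : (W → ZMod 2) → ℂ) : (W → ZMod 2) → ℂ :=
  fun x => (-1 : ℂ) ^ (∑ᶠ w ∈ S, (x w).val) * ψ x

section Stmt7Aux

open Finset

set_option linter.unusedSectionVars false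

variable {W : Type*} [Fintype W] [DecidableEq W] (G : SimpleGraph W) [DecidableRel G.Adj]

lemma sum_darts_fst' {M : Type*} [AddCommMonoid M] (g : W → W → M) :
    ∑ d : G.Dart, g d.fst d.snd = ∑ v, ∑ u ∈ G.neighborFinset v, g v u := by
  let e : G.Dart ≃ Σ v : W, {u // G.Adj v u} :=
    { toFun := fun d => ⟨d.fst, d.snd, d.adj⟩
      invFun := fun p => ⟨(p.1, p.2.1), p.2.2⟩
      left_inv := fun d => rfl
      right_inv := fun p => rfl }
  rw [← e.symm.sum_comp, ← Finset.univ_sigma_univ, Finset.sum_sigma]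
  refine Finset.sum_congr rfl fun v _ => ?_
  rw [Finset.sum_subtype (G.neighborFinset v) (fun u => G.mem_neighborFinset v u) (g v)]
  rfl

lemma sum_edgeFinset_eq_sum_darts {M : Type*} [AddCommMonoid M] (f : Sym2 W → M)
    (g : W → W → M) (h : ∀ u v, G.Adj u v → f s(u, v) = g u v + g v u) :
    ∑ e ∈ G.edgeFinset, f e = ∑ d : G.Dart, g d.fst d.snd := by
  rw [← Finset.sum_fiberwise_of_maps_to
    (fun (d : G.Dart) (_ : d ∈ Finset.univ) => SimpleGraph.mem_edgeFinset.mpr d.edge_mem)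
    (fun d => g d.fst d.snd)]
  refine Finset.sum_congr rfl fun e he => ?_
  rw [SimpleGraph.mem_edgeFinset] at he
  induction e with
  | _ u v =>
    have hadj : G.Adj u v := he
    let d : G.Dart := ⟨(u, v), hadj⟩
    have hfib : (Finset.univ.filter fun d' : G.Dart => d'.edge = s(u, v)) = {d, d.symm} :=
      d.edge_fiber
    rw [hfib, Finset.sum_pair (Ne.symm d.symm_ne), h u v hadj]
    rfl

lemma neg_one_pow_val_add' (a b : ZMod 2) :
    (-1 : ℂ) ^ (a + b).val = (-1 : ℂ) ^ a.val * (-1 : ℂ) ^ b.val := by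
  fin_cases a <;> fin_cases b <;> norm_num [ZMod.val] <;> [rfl; exact pow_one _; exact pow_one _; rfl]

lemma neg_one_pow_natCast' (n : ℕ) :
    (-1 : ℂ) ^ ((n : ZMod 2)).val = (-1 : ℂ) ^ n := by
  rw [ZMod.val_natCast]
  conv_rhs => rw [← Nat.mod_add_div n 2, pow_add, pow_mul]
  norm_num

lemma natCast_zmod_two_eq (n : ℕ) :
    ((n : ZMod 2)) = if Odd n then 1 else 0 := by
  rw [← ZMod.natCast_mod n 2]
  rcases Nat.mod_two_eq_zero_or_one n with h | h <;> simp [h, Nat.odd_iff]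

lemma qForm_finset (x : W → ZMod 2) :
    qForm G x =
      ∑ e ∈ G.edgeFinset, Sym2.lift ⟨fun u v => x u * x v, fun _ _ => mul_comm _ _⟩ e := by
  rw [qForm, ← G.coe_edgeFinset, finsum_mem_coe_finset]

lemma qForm_add_indicator (D : Set W) [DecidablePred (· ∈ D)]
    (hD : ∀ u ∈ D, ∀ v ∈ D, ¬ G.Adj u v) (x : W → ZMod 2) :
    qForm G (x + D.indicator 1) =
      qForm G x + ∑ v, x v * ((G.neighborFinset v ∩ D.toFinset).card : ZMod 2) := by
  have hd : ∀ w, D.indicator (1 : W → ZMod 2) w = if w ∈ D then 1 else 0 := fun w => by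
    simp [Set.indicator_apply]
  set dI : W → ZMod 2 := D.indicator 1 with hdI
  rw [qForm_finset, qForm_finset]
  have step : ∀ e ∈ G.edgeFinset,
      Sym2.lift ⟨fun u v => (x + dI) u * (x + dI) v, fun _ _ => mul_comm _ _⟩ e
        = Sym2.lift ⟨fun u v => x u * x v, fun _ _ => mul_comm _ _⟩ e
          + Sym2.lift ⟨fun u v => x u * dI v + x v * dI u,
              fun u v => by ring⟩ e := by
    intro e he
    rw [SimpleGraph.mem_edgeFinset] at he
    induction e with
    | _ u v =>
      have hadj : G.Adj u v := he
      have hzero : dI u * dI v = 0 := by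
        by_cases hu : u ∈ D
        · by_cases hv : v ∈ D
          · exact absurd hadj (hD u hu v hv)
          · simp [hd, hv]
        · simp [hd, hu]
      simp only [Sym2.lift_mk, Pi.add_apply]
      calc (x u + dI u) * (x v + dI v)
          = x u * x v + (x u * dI v + x v * dI u) + dI u * dI v := by ring
        _ = x u * x v + (x u * dI v + x v * dI u) := by rw [hzero, add_zero]
  rw [Finset.sum_congr rfl step, Finset.sum_add_distrib]
  congr 1
  rw [sum_edgeFinset_eq_sum_darts G _ (fun u v => x u * dI v)
    (fun u v _ => by rw [Sym2.lift_mk])]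
  rw [show (∑ d : G.Dart, x d.fst * dI d.snd) = ∑ v, ∑ u ∈ G.neighborFinset v, x v * dI u from
    sum_darts_fst' G (fun v u => x v * dI u)]
  refine Finset.sum_congr rfl fun v _ => ?_
  rw [← Finset.mul_sum]
  congr 1
  simp only [hd]
  rw [Finset.sum_boole]
  have hfe : (G.neighborFinset v).filter (· ∈ D) = G.neighborFinset v ∩ D.toFinset := by
    ext u; simp [Set.mem_toFinset]
  rw [hfe]

end Stmt7Aux

/-- if `D` is an independent set of `G`, then the operator
`K_D = X_D Z_{Odd(D)}` stabilizes the graph state: `X_D Z_{Odd(D)} |G⟩ = |G⟩`. -/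
theorem stmt7 {W : Type*} [Fintype W] (G : SimpleGraph W) (D : Set W)
    (hD : ∀ u ∈ D, ∀ v ∈ D, ¬ G.Adj u v) :
    XOp D (ZOp (oddNbhd G D) (graphState G)) = graphState G := by
  classical
  funext x
  simp only [XOp, ZOp, graphState]
  set dI : W → ZMod 2 := D.indicator 1 with hdI
  set S : ZMod 2 := ∑ v, x v * ((G.neighborFinset v ∩ D.toFinset).card : ZMod 2) with hS
  set Ofin : Finset W := (oddNbhd G D).toFinset with hOfin
  -- the indicator vanishes on the odd neighbourhood
  have hodd_x : ∀ w ∈ oddNbhd G D, (x + dI) w = x w := by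
    intro w hw
    have hwD : w ∉ D := by
      intro hwD
      have hempty : (G.neighborSet w ∩ D) = ∅ := by
        ext u
        simp only [Set.mem_inter_iff, SimpleGraph.mem_neighborSet, Set.mem_empty_iff_false,
          iff_false, not_and]
        intro hadj hu
        exact hD w hwD u hu hadj
      rw [oddNbhd, Set.mem_setOf_eq, hempty] at hw
      simp at hw
    simp [hdI, Set.indicator_apply, hwD]
  have hA : (∑ᶠ w ∈ oddNbhd G D, ((x + dI) w).val) = ∑ w ∈ Ofin, (x w).val := by
    rw [← Set.coe_toFinset (oddNbhd G D), finsum_mem_coe_finset]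
    refine Finset.sum_congr rfl fun w hw => ?_
    have hw' : w ∈ oddNbhd G D := by rw [hOfin, Set.mem_toFinset] at hw; exact hw
    rw [hodd_x w hw']
  have hmem : ∀ v, v ∈ Ofin ↔ Odd (G.neighborFinset v ∩ D.toFinset).card := by
    intro v
    rw [hOfin, Set.mem_toFinset, oddNbhd, Set.mem_setOf_eq,
      Set.ncard_eq_toFinset_card', Set.toFinset_inter]
    rfl
  have hO : (∑ w ∈ Ofin, x w) = S := by
    rw [hS, ← Finset.univ_inter Ofin, ← Finset.sum_ite_mem]
    refine Finset.sum_congr rfl fun v _ => ?_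
    rw [natCast_zmod_two_eq]
    by_cases h : v ∈ Ofin
    · simp [h, (hmem v).mp h]
    · simp [h, mt (hmem v).mpr h]
  have hcast : ((∑ w ∈ Ofin, (x w).val : ℕ) : ZMod 2) = ∑ w ∈ Ofin, x w := by
    push_cast [ZMod.natCast_val, ZMod.cast_id]
    rfl
  have hq := qForm_add_indicator G D hD x
  rw [hq, hA]
  have hpow : (-1 : ℂ) ^ (∑ w ∈ Ofin, (x w).val) = (-1 : ℂ) ^ S.val := by
    rw [← neg_one_pow_natCast' (∑ w ∈ Ofin, (x w).val), hcast, hO]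
  rw [hpow, neg_one_pow_val_add']
  have hsq : (-1 : ℂ) ^ S.val * (-1 : ℂ) ^ S.val = 1 := by
    rw [← pow_add]
    exact Even.neg_one_pow ⟨S.val, rfl⟩
  calc (-1 : ℂ) ^ S.val *
        ((Real.sqrt 2 : ℂ)⁻¹ ^ Nat.card W * ((-1 : ℂ) ^ (qForm G x).val * (-1 : ℂ) ^ S.val))
      = ((-1 : ℂ) ^ S.val * (-1 : ℂ) ^ S.val) *
        ((Real.sqrt 2 : ℂ)⁻¹ ^ Nat.card W * (-1 : ℂ) ^ (qForm G x).val) := by ring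
    _ = (Real.sqrt 2 : ℂ)⁻¹ ^ Nat.card W * (-1 : ℂ) ^ (qForm G x).val := by rw [hsq, one_mul]
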